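/- Knight's identity: for any real numbers u and v and any τ ∈ (0,1), ρ_τ(u - v) - ρ_τ(u) = -v·ψ_τ(u) + ∫₀^v (1{u ≤ s} - 1{u ≤ 0}) ds, where ρ_τ(u) = u(τ - 1{u ≤ 0}) and ψ_τ(u) = τ - 1{u ≤ 0}. -/

import Mathlib

open MeasureTheory intervalIntegral

/-- Check function ρ_τ(u) = u(τ - 1{u ≤ 0}). -/
noncomputable def rho (τ u : ℝ) : ℝ := u * (τ - if u ≤ 0 then 1 else 0)

/-- ψ_τ(u) = τ - 1{u ≤ 0}. -/
noncomputable def psi (τ u : ℝ) : ℝ := τ - if u ≤ 0 then 1 else 0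

lemma step_mono (u : ℝ) : Monotone (fun s : ℝ => if u ≤ s then (1:ℝ) else 0) := by
  intro a b hab
  by_cases h : u ≤ a
  · simp [h, h.trans hab]
  · by_cases h' : u ≤ b <;> simp [h, h']

lemma step_intble (u a b : ℝ) :
    IntervalIntegrable (fun s : ℝ => if u ≤ s then (1:ℝ) else 0) volume a b :=
  (step_mono u).intervalIntegrable

lemma integ_Ioc (u a b : ℝ) :
    (∫ s in Set.Ioc a b, (if u ≤ s then (1:ℝ) else 0)) = max (b - max a u) 0 := by
  have hae : (fun s : ℝ => if u ≤ s then (1:ℝ) else 0)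
      =ᵐ[volume.restrict (Set.Ioc a b)]
      (Set.indicator (Set.Ioi u) (fun _ => (1:ℝ))) := by
    apply ae_restrict_of_ae
    have h0 : volume ({u} : Set ℝ) = 0 := Real.volume_singleton
    rw [← compl_mem_ae_iff] at h0
    filter_upwards [h0] with s hs
    have hsu : s ≠ u := by simpa using hs
    by_cases h : u ≤ s
    · have : u < s := lt_of_le_of_ne h (Ne.symm hsu)
      simp [h, Set.indicator, this]
    · have : ¬ u < s := fun h' => h h'.le
      simp [h, Set.indicator, this]
  rw [integral_congr_ae hae, setIntegral_indicator measurableSet_Ioi]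
  have h2 : Set.Ioc a b ∩ Set.Ioi u = Set.Ioc (max a u) b := by
    ext s
    simp only [Set.mem_inter_iff, Set.mem_Ioc, Set.mem_Ioi, max_lt_iff]
    tauto
  rw [h2, setIntegral_const, Real.volume_real_Ioc, smul_eq_mul, mul_one]

lemma integ_step (u v : ℝ) :
    (∫ s in (0:ℝ)..v, (if u ≤ s then (1:ℝ) else 0)) = max v u - max 0 u := by
  rcases le_total 0 v with h | h
  · rw [integral_of_le h, integ_Ioc]
    simp only [max_def]
    split_ifs <;> linarith
  · rw [integral_of_ge h, integ_Ioc]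
    simp only [max_def]
    split_ifs <;> linarith

/-- Knight's identity. -/
theorem knight_identity (τ : ℝ) (hτ : τ ∈ Set.Ioo (0:ℝ) 1) (u v : ℝ) :
    rho τ (u - v) - rho τ u =
      -v * psi τ u +
        ∫ s in (0:ℝ)..v, ((if u ≤ s then (1:ℝ) else 0) - (if u ≤ 0 then (1:ℝ) else 0)) := by
  rw [integral_sub (step_intble u 0 v) (intervalIntegrable_const),
    intervalIntegral.integral_const, integ_step, rho, rho, psi, smul_eq_mul, sub_zero]
  simp only [max_def, smul_eq_mul]
  split_ifs <;> ring_nf <;> nlinarith [hτ.1, hτ.2]
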